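/- Let A and B be C*-algebras (or Banach algebras) and let M₁, ..., Mₙ be closed ideals of A and N₁, ..., Nₙ be closed ideals of B, each with bounded approximate identities. For any cross norm ⊗̂ such that the tensor product of closed ideals K ⊗̂ L is a closed ideal of A ⊗̂ B, one has A ⊗̂ (Σᵢ Nᵢ) = Σᵢ (A ⊗̂ Nᵢ) and (Σᵢ Mᵢ) ⊗̂ B = Σᵢ (Mᵢ ⊗̂ B). -/

import Mathlib

open Pointwise Filter

/-- A model of the operator space projective tensor product `A ⊗̂ B` of two C*-algebras:
a Banach *-algebra `T` together with a bilinear, multiplicative, star-preserving map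
`incl : A × B → T` which is a cross norm on elementary tensors and has dense span. -/
structure OSProjTensor (A B T : Type*) [NonUnitalCStarAlgebra A] [NonUnitalCStarAlgebra B]
    [NonUnitalNormedRing T] [StarRing T] [NormedSpace ℂ T] [CompleteSpace T]
    [IsScalarTower ℂ T T] [SMulCommClass ℂ T T] where
  incl : A →ₗ[ℂ] B →ₗ[ℂ] T
  mul_incl : ∀ (a a' : A) (b b' : B), incl a b * incl a' b' = incl (a * a') (b * b')
  star_incl : ∀ (a : A) (b : B), star (incl a b) = incl (star a) (star b)
  norm_incl : ∀ (a : A) (b : B), ‖incl a b‖ = ‖a‖ * ‖b‖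
  dense_span : Dense (Submodule.span ℂ {x : T | ∃ a b, x = incl a b} : Set T)

variable {A B T : Type*} [NonUnitalCStarAlgebra A] [NonUnitalCStarAlgebra B]
  [NonUnitalNormedRing T] [StarRing T] [NormedSpace ℂ T] [CompleteSpace T]
  [IsScalarTower ℂ T T] [SMulCommClass ℂ T T]

/-- The product ideal `K ⊗̂ L`: the closure in `A ⊗̂ B` of the span of the elementary
tensors with entries from `K` and `L`. -/
def OSProjTensor.prodIdeal (p : OSProjTensor A B T) (K : Set A) (L : Set B) : Set T :=
  closure (Submodule.span ℂ {x : T | ∃ a ∈ K, ∃ b ∈ L, x = p.incl a b} : Set T)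

/-- A bounded approximate identity for a subset `I` of a normed ring. -/
def BoundedApproxIdentity {R : Type*} [NonUnitalNormedRing R] (I : Set R) : Prop :=
  ∃ (ι : Type) (l : Filter ι) (e : ι → R), l.NeBot ∧ (∀ i, e i ∈ I) ∧
    (∃ C : ℝ, ∀ i, ‖e i‖ ≤ C) ∧
    ∀ x ∈ I, Filter.Tendsto (fun i => e i * x) l (nhds x) ∧
      Filter.Tendsto (fun i => x * e i) l (nhds x)

section OrderAux
open Unitization




noncomputable def myCStarOrder (A : Type*) [NonUnitalCStarAlgebra A] : PartialOrder A :=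
  letI := CStarAlgebra.spectralOrder (Unitization ℂ A)
  PartialOrder.lift (inr : A → Unitization ℂ A) (inr_injective (R := ℂ))

lemma myCStarOrder_le_iff {A : Type*} [NonUnitalCStarAlgebra A] (x y : A) :
    (myCStarOrder A).le x y ↔
      (letI := CStarAlgebra.spectralOrder (Unitization ℂ A); (x : Unitization ℂ A) ≤ y) :=
  Iff.rfl

lemma myCStarOrdered (A : Type*) [NonUnitalCStarAlgebra A] :
    letI := myCStarOrder A; StarOrderedRing A := by
  letI := myCStarOrder A
  letI := CStarAlgebra.spectralOrder (Unitization ℂ A)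
  haveI := CStarAlgebra.spectralOrderedRing (Unitization ℂ A)
  refine StarOrderedRing.of_le_iff fun x y => ?_
  rw [myCStarOrder_le_iff]
  constructor
  · intro h
    obtain ⟨hsa, hres⟩ := h
    rw [← inr_sub ℂ y x] at hsa hres
    have hsa' : IsSelfAdjoint (y - x) := (isSelfAdjoint_inr (R := ℂ)).mp hsa
    have hspec : ∀ r ∈ quasispectrum ℝ (y - x), 0 ≤ r := by
      rw [Unitization.quasispectrum_eq_spectrum_inr' ℝ ℂ]
      exact (SpectrumRestricts.nnreal_iff).mp hres
    refine ⟨cfcₙ Real.sqrt (y - x), ?_⟩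
    have h1 : IsSelfAdjoint (cfcₙ Real.sqrt (y - x)) := cfcₙ_predicate _ _
    have : star (cfcₙ Real.sqrt (y - x)) * cfcₙ Real.sqrt (y - x) = y - x := by
      rw [h1.star_eq, ← cfcₙ_mul ..]
      calc cfcₙ (fun r => Real.sqrt r * Real.sqrt r) (y - x)
          = cfcₙ (id : ℝ → ℝ) (y - x) := by
            refine cfcₙ_congr fun r hr => ?_
            exact Real.mul_self_sqrt (hspec r hr)
        _ = y - x := cfcₙ_id ℝ (y - x)
    rw [this]; abel
  · rintro ⟨s, rfl⟩
    have : (x : Unitization ℂ A) ≤ x + star (s : Unitization ℂ A) * s :=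
      le_add_of_nonneg_right (star_mul_self_nonneg _)
    simpa [inr_add, inr_mul, inr_star] using this

open Unitization in
lemma exists_right_approx_unit (A : Type*) [NonUnitalCStarAlgebra A] (S : Finset A)
    {d : ℝ} (hd : 0 < d) : ∃ u : A, ‖u‖ ≤ 1 ∧ ∀ a ∈ S, ‖a - a * u‖ < d := by
  letI := myCStarOrder A
  haveI := myCStarOrdered A
  have hau := CStarAlgebra.increasingApproximateUnit A
  haveI : (CStarAlgebra.approximateUnit A).NeBot := hau.toIsApproximateUnit.neBot
  have h1 : ∀ᶠ u in CStarAlgebra.approximateUnit A, ‖u‖ ≤ 1 := hau.eventually_norm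
  have h2 : ∀ᶠ u in CStarAlgebra.approximateUnit A, ∀ a ∈ S, ‖a - a * u‖ < d := by
    rw [Filter.eventually_all_finset]
    intro a _
    have := Metric.tendsto_nhds.mp (hau.tendsto_mul_left a) d hd
    refine this.mono fun u hu => ?_
    rwa [dist_eq_norm, norm_sub_rev] at hu
  exact (h1.and h2).exists

end OrderAux

-- ### begin aux
namespace OSProjTensor

/-- `A ⊗̂ L` as a closed submodule. -/
def Jsub (p : OSProjTensor A B T) (L : Set B) : Submodule ℂ T :=
  (Submodule.span ℂ {x : T | ∃ a ∈ (Set.univ : Set A), ∃ b ∈ L, x = p.incl a b}).topologicalClosure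

lemma coe_Jsub (p : OSProjTensor A B T) (L : Set B) :
    (p.Jsub L : Set T) = p.prodIdeal Set.univ L :=
  Submodule.topologicalClosure_coe _

lemma isClosed_Jsub (p : OSProjTensor A B T) (L : Set B) : IsClosed (p.Jsub L : Set T) :=
  (Submodule.span ℂ _).isClosed_topologicalClosure

lemma incl_isBoundedBilinear (p : OSProjTensor A B T) :
    IsBoundedBilinearMap ℂ (fun q : A × B => p.incl q.1 q.2) where
  add_left a a' b := by simp [map_add]
  smul_left c a b := by simp
  add_right a b b' := by simp
  smul_right c a b := by simp
  bound := ⟨1, one_pos, fun a b => by rw [p.norm_incl, one_mul]⟩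

/-- Any element of `T` multiplied (on the left) into an elementary tensor with second entry in a
two-sided ideal `N` lands in `A ⊗̂ N`. -/
lemma mul_gen_mem_Jsub (p : OSProjTensor A B T) (N : TwoSidedIdeal B) (t : T) {a : A} {b : B}
    (hb : b ∈ N) : t * p.incl a b ∈ p.Jsub (N : Set B) := by
  set U : Submodule ℂ T :=
    Submodule.comap (LinearMap.mulRight ℂ (p.incl a b)) (p.Jsub (N : Set B)) with hU
  have hUclosed : IsClosed (U : Set T) := by
    have : (U : Set T) = (fun t : T => t * p.incl a b) ⁻¹' (p.Jsub (N : Set B) : Set T) := rfl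
    rw [this]
    exact (p.isClosed_Jsub _).preimage (continuous_mul_right _)
  have hspan : Submodule.span ℂ {x : T | ∃ a' b', x = p.incl a' b'} ≤ U := by
    rw [Submodule.span_le]
    rintro x ⟨a', b', rfl⟩
    show p.incl a' b' * p.incl a b ∈ p.Jsub (N : Set B)
    rw [p.mul_incl]
    exact Submodule.le_topologicalClosure _
      (Submodule.subset_span ⟨a' * a, trivial, b' * b, N.mul_mem_left _ _ hb, rfl⟩)
  have hsub : closure (Submodule.span ℂ {x : T | ∃ a' b', x = p.incl a' b'} : Set T)
      ⊆ (U : Set T) := closure_minimal hspan hUclosed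
  have := p.dense_span.closure_eq
  exact hsub (by rw [this]; trivial)

/-- `A ⊗̂ N` is a right ideal. -/
lemma Jsub_mul_mem (p : OSProjTensor A B T) (N : TwoSidedIdeal B) {x : T} (t : T)
    (hx : x ∈ p.Jsub (N : Set B)) : x * t ∈ p.Jsub (N : Set B) := by
  -- first: elementary tensors times arbitrary t
  have hgen : ∀ (a : A) (b : B), b ∈ N → p.incl a b * t ∈ p.Jsub (N : Set B) := by
    intro a b hb
    set U : Submodule ℂ T :=
      Submodule.comap (LinearMap.mulLeft ℂ (p.incl a b)) (p.Jsub (N : Set B)) with hU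
    have hUclosed : IsClosed (U : Set T) := by
      have : (U : Set T) = (fun s : T => p.incl a b * s) ⁻¹' (p.Jsub (N : Set B) : Set T) := rfl
      rw [this]
      exact (p.isClosed_Jsub _).preimage (continuous_mul_left _)
    have hspan : Submodule.span ℂ {x : T | ∃ a' b', x = p.incl a' b'} ≤ U := by
      rw [Submodule.span_le]
      rintro x ⟨a', b', rfl⟩
      show p.incl a b * p.incl a' b' ∈ p.Jsub (N : Set B)
      rw [p.mul_incl]
      exact Submodule.le_topologicalClosure _
        (Submodule.subset_span ⟨a * a', trivial, b * b', N.mul_mem_right _ _ hb, rfl⟩)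
    have hsub : closure (Submodule.span ℂ {x : T | ∃ a' b', x = p.incl a' b'} : Set T)
        ⊆ (U : Set T) := closure_minimal hspan hUclosed
    exact hsub (by rw [p.dense_span.closure_eq]; trivial)
  set V : Submodule ℂ T :=
    Submodule.comap (LinearMap.mulRight ℂ t) (p.Jsub (N : Set B)) with hV
  have hVclosed : IsClosed (V : Set T) := by
    have : (V : Set T) = (fun s : T => s * t) ⁻¹' (p.Jsub (N : Set B) : Set T) := rfl
    rw [this]
    exact (p.isClosed_Jsub _).preimage (continuous_mul_right _)
  have hspan : Submodule.span ℂ {x : T | ∃ a ∈ (Set.univ : Set A), ∃ b ∈ (N : Set B),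
      x = p.incl a b} ≤ V := by
    rw [Submodule.span_le]
    rintro x ⟨a, -, b, hb, rfl⟩
    exact hgen a b hb
  have hle : p.Jsub (N : Set B) ≤ V := Submodule.topologicalClosure_minimal _ hspan hVclosed
  exact hle hx


/-- The ideal `A ⊗̂ N` admits bounded approximate right units made of elementary tensors. -/
lemma Jsub_approx (p : OSProjTensor A B T) (N : TwoSidedIdeal B)
    (hbai : BoundedApproxIdentity (N : Set B)) :
    ∃ C : ℝ, 0 ≤ C ∧ ∀ j ∈ p.Jsub (N : Set B), ∀ δ : ℝ, 0 < δ →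
      ∃ e : T, ‖e‖ ≤ C ∧ (∀ t : T, t * e ∈ p.Jsub (N : Set B)) ∧ ‖j - j * e‖ < δ := by
  obtain ⟨ι, l, en, hne, hmem, ⟨C, hCb⟩, htend⟩ := hbai
  haveI := hne
  have hC0 : (0:ℝ) ≤ C := by
    obtain ⟨i⟩ := Filter.nonempty_of_neBot l
    exact (norm_nonneg (en i)).trans (hCb i)
  refine ⟨C, hC0, fun j hj δ hδ => ?_⟩
  letI := myCStarOrder A
  haveI := myCStarOrdered A
  have hau := CStarAlgebra.increasingApproximateUnit A
  haveI : (CStarAlgebra.approximateUnit A).NeBot := hau.toIsApproximateUnit.neBot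
  set F : Filter (A × B) := (CStarAlgebra.approximateUnit A) ×ˢ (Filter.map en l) with hF
  -- the span of elementary tensors with second entry in N
  set S : Set T := {x : T | ∃ a ∈ (Set.univ : Set A), ∃ b ∈ (N : Set B), x = p.incl a b} with hS
  -- approximate j by an element of the span
  have hδ' : (0:ℝ) < δ / (2 * (1 + C)) := by positivity
  obtain ⟨j', hj'span, hjj'⟩ : ∃ j' ∈ Submodule.span ℂ S, ‖j - j'‖ < δ / (2 * (1 + C)) := by
    have hjc : j ∈ closure (Submodule.span ℂ S : Set T) := by
      rw [← Submodule.topologicalClosure_coe]; exact hj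
    obtain ⟨w, hw, hdw⟩ := Metric.mem_closure_iff.mp hjc _ hδ'
    exact ⟨w, hw, by rwa [dist_eq_norm] at hdw⟩
  -- elements of the span are approximated by right multiplication by elementary tensors
  have htt : ∀ y ∈ Submodule.span ℂ S,
      Filter.Tendsto (fun w : A × B => y * p.incl w.1 w.2) F (nhds y) := by
    intro y hy
    induction hy using Submodule.span_induction with
    | mem x hx =>
      obtain ⟨a, -, b, hb, rfl⟩ := hx
      have h0 : (fun w : A × B => p.incl a b * p.incl w.1 w.2)
          = fun w : A × B => p.incl (a * w.1) (b * w.2) := by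
        funext w; rw [p.mul_incl]
      rw [h0]
      have hA : Filter.Tendsto (fun w : A × B => a * w.1) F (nhds a) :=
        (hau.tendsto_mul_left a).comp Filter.tendsto_fst
      have hB : Filter.Tendsto (fun w : A × B => b * w.2) F (nhds b) := by
        have h1 : Filter.Tendsto (fun i => b * en i) l (nhds b) := (htend b hb).2
        have h2 : Filter.Tendsto (fun v : B => b * v) (Filter.map en l) (nhds b) := by
          rwa [Filter.tendsto_map'_iff]
        exact h2.comp Filter.tendsto_snd
      exact (p.incl_isBoundedBilinear.continuous.tendsto (a, b)).comp (hA.prodMk_nhds hB)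
    | zero => simp only [zero_mul]; exact tendsto_const_nhds
    | add x y _ _ hx hy =>
      simp only [add_mul]; exact hx.add hy
    | smul c x _ hx =>
      simp only [smul_mul_assoc]; exact hx.const_smul c
  -- gather the eventual properties
  have ev1 : ∀ᶠ w : A × B in F, ‖w.1‖ ≤ 1 := hau.eventually_norm.prod_inl _
  have evN : ∀ᶠ v : B in Filter.map en l, v ∈ (N : Set B) := by
    rw [Filter.eventually_map]; exact Filter.Eventually.of_forall hmem
  have evC : ∀ᶠ v : B in Filter.map en l, ‖v‖ ≤ C := by
    rw [Filter.eventually_map]; exact Filter.Eventually.of_forall hCb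
  have ev2 : ∀ᶠ w : A × B in F, w.2 ∈ (N : Set B) := evN.prod_inr _
  have ev3 : ∀ᶠ w : A × B in F, ‖w.2‖ ≤ C := evC.prod_inr _
  have ev4 : ∀ᶠ w : A × B in F, ‖j' - j' * p.incl w.1 w.2‖ < δ / 2 := by
    have := Metric.tendsto_nhds.mp (htt j' hj'span) (δ / 2) (by positivity)
    refine this.mono fun w hw => ?_
    rwa [dist_eq_norm, norm_sub_rev] at hw
  obtain ⟨⟨u, v⟩, h1, h2, h3, h4⟩ := ((ev1.and (ev2.and (ev3.and ev4)))).exists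
  refine ⟨p.incl u v, ?_, fun t => p.mul_gen_mem_Jsub N t h2, ?_⟩
  · rw [p.norm_incl]
    calc ‖u‖ * ‖v‖ ≤ 1 * C := mul_le_mul h1 h3 (norm_nonneg _) zero_le_one
      _ = C := one_mul C
  · have heC : ‖p.incl u v‖ ≤ C := by
      rw [p.norm_incl]
      calc ‖u‖ * ‖v‖ ≤ 1 * C := mul_le_mul h1 h3 (norm_nonneg _) zero_le_one
        _ = C := one_mul C
    have key : j - j * p.incl u v
        = (j - j') + (j' - j' * p.incl u v) + (j' - j) * p.incl u v := by noncomm_ring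
    rw [key]
    have hb1 : ‖(j - j') + (j' - j' * p.incl u v) + (j' - j) * p.incl u v‖
        ≤ ‖j - j'‖ + ‖j' - j' * p.incl u v‖ + ‖j - j'‖ * ‖p.incl u v‖ := by
      calc ‖(j - j') + (j' - j' * p.incl u v) + (j' - j) * p.incl u v‖
          ≤ ‖(j - j') + (j' - j' * p.incl u v)‖ + ‖(j' - j) * p.incl u v‖ := norm_add_le _ _
        _ ≤ ‖j - j'‖ + ‖j' - j' * p.incl u v‖ + ‖(j' - j) * p.incl u v‖ := by
            gcongr; exact norm_add_le _ _
        _ ≤ ‖j - j'‖ + ‖j' - j' * p.incl u v‖ + ‖j' - j‖ * ‖p.incl u v‖ := by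
            gcongr; exact norm_mul_le _ _
        _ = ‖j - j'‖ + ‖j' - j' * p.incl u v‖ + ‖j - j'‖ * ‖p.incl u v‖ := by
            rw [norm_sub_rev j' j]
    have hcancel : δ / (2 * (1 + C)) * (2 * (1 + C)) = δ :=
      div_mul_cancel₀ _ (by positivity)
    have hnn : (0:ℝ) ≤ ‖p.incl u v‖ := norm_nonneg _
    have hnn2 : (0:ℝ) ≤ ‖j - j'‖ := norm_nonneg _
    nlinarith [mul_le_mul hjj'.le heC hnn hδ'.le]

end OSProjTensor


/-- Membership in a finite supremum of two-sided ideals gives a decomposition as a sum. -/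
lemma twoSided_iSup_decomp {R : Type*} [NonUnitalNonAssocRing R] {n : ℕ}
    (N : Fin n → TwoSidedIdeal R) (b : R) (hb : b ∈ (⨆ i, N i : TwoSidedIdeal R)) :
    ∃ g : Fin n → R, (∀ i, g i ∈ N i) ∧ b = ∑ i, g i := by
  classical
  let D : TwoSidedIdeal R := TwoSidedIdeal.mk'
    {b | ∃ g : Fin n → R, (∀ i, g i ∈ N i) ∧ b = ∑ i, g i}
    ⟨0, fun i => (N i).zero_mem, by simp⟩
    (by rintro x y ⟨g, hg, rfl⟩ ⟨g', hg', rfl⟩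
        exact ⟨g + g', fun i => (N i).add_mem (hg i) (hg' i),
          by rw [← Finset.sum_add_distrib]; rfl⟩)
    (by rintro x ⟨g, hg, rfl⟩
        exact ⟨-g, fun i => (N i).neg_mem (hg i), by simp⟩)
    (by rintro x y ⟨g, hg, rfl⟩
        exact ⟨fun i => x * g i, fun i => (N i).mul_mem_left _ _ (hg i),
          by rw [Finset.mul_sum]⟩)
    (by rintro x y ⟨g, hg, rfl⟩
        exact ⟨fun i => g i * y, fun i => (N i).mul_mem_right _ _ (hg i),
          by rw [Finset.sum_mul]⟩)
  have hle : (⨆ i, N i : TwoSidedIdeal R) ≤ D := by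
    refine iSup_le fun i => ?_
    intro x hx
    refine (TwoSidedIdeal.mem_mk' _ _ _ _ _ _ _).mpr ?_
    refine ⟨Pi.single i x, fun j => ?_, by simp⟩
    by_cases h : j = i
    · subst h; simp [Pi.single_eq_same, hx]
    · simp [Pi.single_eq_of_ne h, (N j).zero_mem]
  have hmem : b ∈ D := hle hb
  rwa [TwoSidedIdeal.mem_mk'] at hmem
lemma key_closed {I J : Submodule ℂ T} (hIc : IsClosed (I : Set T)) (hJc : IsClosed (J : Set T))
    (hIr : ∀ x ∈ I, ∀ t : T, x * t ∈ I) {C : ℝ} (hC : 0 ≤ C)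
    (hJe : ∀ j ∈ J, ∀ δ : ℝ, 0 < δ →
      ∃ e : T, ‖e‖ ≤ C ∧ (∀ t : T, t * e ∈ J) ∧ ‖j - j * e‖ < δ) :
    IsClosed ((I ⊔ J : Submodule ℂ T) : Set T) := by
  set K := (I ⊔ J : Submodule ℂ T) with hK
  refine isClosed_of_closure_subset fun z hz => ?_
  -- the one-step approximation
  have step : ∀ y : T, y ∈ closure (K : Set T) → ∀ δ : ℝ, 0 < δ →
      ∃ y' jj ii : T, y' ∈ closure (K : Set T) ∧ jj ∈ J ∧ ii ∈ I ∧
        ‖jj‖ ≤ C * ‖y‖ ∧ y = y' + jj + ii ∧ ‖y'‖ < δ := by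
    intro y hy δ hδ
    have hδ₁ : (0:ℝ) < δ / (3 + C) := by positivity
    obtain ⟨w, hwK, hww⟩ := Metric.mem_closure_iff.mp hy _ hδ₁
    rw [dist_eq_norm] at hww
    obtain ⟨i₀, hi₀, j₀, hj₀, hw⟩ := Submodule.mem_sup.mp hwK
    obtain ⟨e, heC, heJ, hje⟩ := hJe j₀ hj₀ _ hδ₁
    refine ⟨y - y * e - (i₀ - i₀ * e), y * e, i₀ - i₀ * e, ?_, heJ y,
      sub_mem hi₀ (hIr i₀ hi₀ e), ?_, by abel, ?_⟩
    · have h1 : y ∈ closure (K : Set T) := hy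
      have h2 : y * e ∈ closure (K : Set T) :=
        subset_closure (show y * e ∈ K from (le_sup_right : J ≤ K) (heJ y))
      have h3 : (i₀ : T) - i₀ * e ∈ closure (K : Set T) :=
        subset_closure (K.sub_mem ((le_sup_left : I ≤ K) hi₀)
          ((le_sup_left : I ≤ K) (hIr i₀ hi₀ e)))
      have := K.topologicalClosure.sub_mem (Submodule.sub_mem _
        (show y ∈ K.topologicalClosure from h1) (show y * e ∈ K.topologicalClosure from h2))
        (show (i₀ : T) - i₀ * e ∈ K.topologicalClosure from h3)
      exact this
    · calc ‖y * e‖ ≤ ‖y‖ * ‖e‖ := norm_mul_le _ _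
        _ ≤ ‖y‖ * C := by gcongr
        _ = C * ‖y‖ := mul_comm _ _
    · have key : y - y * e - (i₀ - i₀ * e) = (y - w) - (y - w) * e + (j₀ - j₀ * e) := by
        rw [← hw]; noncomm_ring
      rw [key]
      have hX : ‖(y - w) - (y - w) * e‖ ≤ ‖y - w‖ * (1 + C) := by
        calc ‖(y - w) - (y - w) * e‖ ≤ ‖y - w‖ + ‖(y - w) * e‖ := norm_sub_le _ _
          _ ≤ ‖y - w‖ + ‖y - w‖ * C := by
              have h := norm_mul_le (y - w) e
              nlinarith [norm_nonneg (y - w), norm_nonneg e]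
          _ = ‖y - w‖ * (1 + C) := by ring
      have htot : ‖(y - w) - (y - w) * e + (j₀ - j₀ * e)‖ <
          (δ / (3 + C)) * (1 + C) + δ / (3 + C) := by
        calc ‖(y - w) - (y - w) * e + (j₀ - j₀ * e)‖
            ≤ ‖(y - w) - (y - w) * e‖ + ‖j₀ - j₀ * e‖ := norm_add_le _ _
          _ < (δ / (3 + C)) * (1 + C) + δ / (3 + C) := by
              have h1C : (0:ℝ) < 1 + C := by linarith
              have := mul_le_mul_of_nonneg_right hww.le h1C.le
              nlinarith
      have hcancel : δ / (3 + C) * (3 + C) = δ := div_mul_cancel₀ _ (by positivity)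
      nlinarith [hδ₁]
  -- now the recursion
  choose y' jj ii hy' hjJ hiI hjb heq hnrm using step
  set q : {y : T // y ∈ closure (K : Set T)} → ℕ → {y : T // y ∈ closure (K : Set T)} :=
    fun y k => ⟨y' y y.2 ((1/2)^(k+1)) (by positivity), hy' y y.2 _ (by positivity)⟩ with hq
  set seq : ℕ → {y : T // y ∈ closure (K : Set T)} :=
    fun k => Nat.rec ⟨z, hz⟩ (fun k y => q y k) k with hseqdef
  set J' : ℕ → T := fun k => jj (seq k) (seq k).2 ((1/2)^(k+1)) (by positivity) with hJ'
  set I' : ℕ → T := fun k => ii (seq k) (seq k).2 ((1/2)^(k+1)) (by positivity) with hI'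
  have hseq_succ : ∀ k, (seq k : T) = (seq (k+1) : T) + J' k + I' k := by
    intro k
    exact heq (seq k) (seq k).2 _ (by positivity)
  have hJ'mem : ∀ k, J' k ∈ J := fun k => hjJ _ _ _ (by positivity)
  have hI'mem : ∀ k, I' k ∈ I := fun k => hiI _ _ _ (by positivity)
  have hsn : ∀ k, ‖(seq (k+1) : T)‖ < (1/2:ℝ)^(k+1) := by
    intro k
    exact hnrm (seq k) (seq k).2 _ (by positivity)
  set D : ℝ := ‖z‖ + 1 with hD
  have hDpos : (0:ℝ) < D := by positivity
  have hseqbound : ∀ k, ‖(seq k : T)‖ ≤ D * (1/2:ℝ)^k := by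
    intro k
    cases k with
    | zero =>
      show ‖z‖ ≤ D * (1/2:ℝ)^0
      simp only [pow_zero, mul_one, hD]
      linarith [norm_nonneg z]
    | succ m =>
      have h1 : (1:ℝ) ≤ D := by simp [hD, norm_nonneg]
      have := (hsn m).le
      calc ‖(seq (m+1) : T)‖ ≤ (1/2:ℝ)^(m+1) := this
        _ ≤ D * (1/2)^(m+1) := by nlinarith [pow_pos (by norm_num : (0:ℝ) < 1/2) (m+1)]
  have hJ'bound : ∀ k, ‖J' k‖ ≤ C * D * (1/2:ℝ)^k := by
    intro k
    calc ‖J' k‖ ≤ C * ‖(seq k : T)‖ := hjb _ _ _ (by positivity)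
      _ ≤ C * (D * (1/2)^k) := by
          apply mul_le_mul_of_nonneg_left (hseqbound k) hC
      _ = C * D * (1/2)^k := by ring
  have hI'bound : ∀ k, ‖I' k‖ ≤ (2 + C) * D * (1/2:ℝ)^k := by
    intro k
    have h : I' k = (seq k : T) - (seq (k+1) : T) - J' k := by
      have h0 := hseq_succ k; rw [h0]; abel
    rw [h]
    have h1 := hseqbound k
    have h2 := hseqbound (k+1)
    have h3 := hJ'bound k
    have hp : (0:ℝ) < (1/2:ℝ)^k := by positivity
    calc ‖(seq k : T) - (seq (k+1) : T) - J' k‖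
        ≤ ‖(seq k : T)‖ + ‖(seq (k+1) : T)‖ + ‖J' k‖ := norm_sub_le _ _ |>.trans (by
          have := norm_sub_le ((seq k : T) - (seq (k+1) : T)) (J' k)
          have := norm_sub_le (seq k : T) (seq (k+1) : T)
          nlinarith [norm_nonneg (J' k)])
      _ ≤ D * (1/2)^k + D * (1/2)^(k+1) + C * D * (1/2)^k := by gcongr
      _ ≤ (2 + C) * D * (1/2)^k := by
          rw [pow_succ]
          nlinarith
  have hgeo : Summable (fun k => (1/2:ℝ)^k) := summable_geometric_two
  have hsumJ : Summable J' := by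
    refine Summable.of_norm (Summable.of_nonneg_of_le (fun k => norm_nonneg _) hJ'bound ?_)
    simpa [mul_assoc] using hgeo.mul_left (C * D)
  have hsumI : Summable I' := by
    refine Summable.of_norm (Summable.of_nonneg_of_le (fun k => norm_nonneg _) hI'bound ?_)
    simpa [mul_assoc] using hgeo.mul_left ((2 + C) * D)
  have hpartial : ∀ m, ∑ k ∈ Finset.range m, (J' k + I' k) = z - (seq m : T) := by
    intro m
    induction m with
    | zero => simp [hseqdef]
    | succ m ihm =>
      rw [Finset.sum_range_succ, ihm]
      rw [hseq_succ m]; abel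
  have hseq0 : Filter.Tendsto (fun m => (seq m : T)) Filter.atTop (nhds 0) := by
    refine squeeze_zero_norm (fun m => hseqbound m) ?_
    have : Filter.Tendsto (fun m : ℕ => D * (1/2:ℝ)^m) Filter.atTop (nhds (D * 0)) :=
      (tendsto_pow_atTop_nhds_zero_of_lt_one (by norm_num) (by norm_num)).const_mul D
    simpa using this
  have hlim1 : Filter.Tendsto (fun m => ∑ k ∈ Finset.range m, (J' k + I' k))
      Filter.atTop (nhds z) := by
    have : (fun m => ∑ k ∈ Finset.range m, (J' k + I' k)) = fun m => z - (seq m : T) := by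
      funext m; exact hpartial m
    rw [this]
    simpa using (tendsto_const_nhds (x := z)).sub hseq0
  have hlim2 : Filter.Tendsto (fun m => ∑ k ∈ Finset.range m, (J' k + I' k))
      Filter.atTop (nhds (∑' k, J' k + ∑' k, I' k)) := by
    have h1 := hsumJ.hasSum.tendsto_sum_nat
    have h2 := hsumI.hasSum.tendsto_sum_nat
    have := h1.add h2
    simpa [← Finset.sum_add_distrib] using this
  have hz_eq : z = ∑' k, J' k + ∑' k, I' k := tendsto_nhds_unique hlim1 hlim2
  have hJmem : (∑' k, J' k) ∈ J := by
    refine hJc.mem_of_tendsto hsumJ.hasSum (Filter.Eventually.of_forall fun s => ?_)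
    exact sum_mem fun k _ => hJ'mem k
  have hImem : (∑' k, I' k) ∈ I := by
    refine hIc.mem_of_tendsto hsumI.hasSum (Filter.Eventually.of_forall fun s => ?_)
    exact sum_mem fun k _ => hI'mem k
  rw [hz_eq]
  exact add_mem ((le_sup_right : J ≤ K) hJmem) ((le_sup_left : I ≤ K) hImem)

section Assembly

lemma finset_sup_closed {n : ℕ} (Js : Fin n → Submodule ℂ T)
    (hc : ∀ i, IsClosed ((Js i : Set T)))
    (hr : ∀ i, ∀ x ∈ Js i, ∀ t : T, x * t ∈ Js i)
    (happ : ∀ i, ∃ C : ℝ, 0 ≤ C ∧ ∀ j ∈ Js i, ∀ δ : ℝ, 0 < δ →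
      ∃ e : T, ‖e‖ ≤ C ∧ (∀ t : T, t * e ∈ Js i) ∧ ‖j - j * e‖ < δ) :
    ∀ s : Finset (Fin n), IsClosed ((⨆ i ∈ s, Js i : Submodule ℂ T) : Set T) ∧
      (∀ x ∈ (⨆ i ∈ s, Js i : Submodule ℂ T), ∀ t : T, x * t ∈ (⨆ i ∈ s, Js i : Submodule ℂ T)) := by
  intro s
  induction s using Finset.induction_on with
  | empty =>
    have hbot : (⨆ i ∈ (∅ : Finset (Fin n)), Js i) = (⊥ : Submodule ℂ T) := by simp
    rw [hbot]
    constructor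
    · rw [Submodule.bot_coe]; exact isClosed_singleton
    · intro x hx t
      rw [Submodule.mem_bot] at hx ⊢
      rw [hx, zero_mul]
  | @insert a s' ha ih =>
    rw [Finset.iSup_insert]
    obtain ⟨hIc, hIr⟩ := ih
    obtain ⟨C, hC0, hCe⟩ := happ a
    constructor
    · rw [sup_comm]
      exact key_closed hIc (hc a) hIr hC0 hCe
    · intro x hx t
      obtain ⟨y, hy, zz, hzz, rfl⟩ := Submodule.mem_sup.mp hx
      rw [add_mul]
      exact Submodule.add_mem _ (Submodule.mem_sup_left (hr a y hy t))
        (Submodule.mem_sup_right (hIr zz hzz t))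

theorem OSProjTensor.main_half (p : OSProjTensor A B T) {n : ℕ} (N : Fin n → TwoSidedIdeal B)
    (hNbai : ∀ i, BoundedApproxIdentity ((N i : Set B))) :
    p.prodIdeal Set.univ ((⨆ i, N i : TwoSidedIdeal B) : Set B) =
      {x : T | ∃ f : Fin n → T, (∀ i, f i ∈ p.prodIdeal Set.univ ((N i : Set B))) ∧
        x = ∑ i, f i} := by
  classical
  set Js : Fin n → Submodule ℂ T := fun i => p.Jsub ((N i : Set B)) with hJs
  have hc : ∀ i, IsClosed ((Js i : Set T)) := fun i => p.isClosed_Jsub _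
  have hr : ∀ i, ∀ x ∈ Js i, ∀ t : T, x * t ∈ Js i := fun i x hx t => p.Jsub_mul_mem (N i) t hx
  have happ : ∀ i, ∃ C : ℝ, 0 ≤ C ∧ ∀ j ∈ Js i, ∀ δ : ℝ, 0 < δ →
      ∃ e : T, ‖e‖ ≤ C ∧ (∀ t : T, t * e ∈ Js i) ∧ ‖j - j * e‖ < δ :=
    fun i => p.Jsub_approx (N i) (hNbai i)
  obtain ⟨hKc, -⟩ := finset_sup_closed Js hc hr happ Finset.univ
  have hsup_univ : (⨆ i ∈ Finset.univ, Js i) = ⨆ i, Js i := by simp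
  rw [hsup_univ] at hKc
  set K : Submodule ℂ T := ⨆ i, Js i with hK
  -- the right-hand side is the coercion of `K`
  have hRHS : {x : T | ∃ f : Fin n → T, (∀ i, f i ∈ p.prodIdeal Set.univ ((N i : Set B))) ∧
      x = ∑ i, f i} = (K : Set T) := by
    ext x
    simp only [Set.mem_setOf_eq, SetLike.mem_coe]
    constructor
    · rintro ⟨f, hf, rfl⟩
      refine Submodule.sum_mem _ fun i _ => (le_iSup Js i) ?_
      have : f i ∈ (Js i : Set T) := by rw [hJs]; rw [p.coe_Jsub]; exact hf i
      exact this
    · intro hx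
      obtain ⟨f, hf, hfx⟩ := (Submodule.mem_iSup_iff_exists_finsupp Js x).mp hx
      refine ⟨fun i => f i, fun i => ?_, ?_⟩
      · rw [← p.coe_Jsub]; exact hf i
      · rw [← hfx, Finsupp.sum_fintype]
        intro i; rfl
  rw [hRHS]
  -- both sides equal
  apply Set.Subset.antisymm
  · -- prodIdeal ⊆ K
    refine closure_minimal ?_ hKc
    have hspan : Submodule.span ℂ {x : T | ∃ a ∈ (Set.univ : Set A),
        ∃ b ∈ ((⨆ i, N i : TwoSidedIdeal B) : Set B), x = p.incl a b} ≤ K := by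
      rw [Submodule.span_le]
      rintro x ⟨a, -, b, hb, rfl⟩
      obtain ⟨g, hg, rfl⟩ := twoSided_iSup_decomp N b hb
      rw [map_sum]
      refine Submodule.sum_mem _ fun i _ => (le_iSup Js i) ?_
      exact Submodule.le_topologicalClosure _
        (Submodule.subset_span ⟨a, trivial, g i, hg i, rfl⟩)
    exact hspan
  · -- K ⊆ prodIdeal
    have hle : K ≤ (Submodule.span ℂ {x : T | ∃ a ∈ (Set.univ : Set A),
        ∃ b ∈ ((⨆ i, N i : TwoSidedIdeal B) : Set B), x = p.incl a b}).topologicalClosure := by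
      refine iSup_le fun i => ?_
      refine Submodule.topologicalClosure_mono (Submodule.span_mono ?_)
      rintro x ⟨a, -, b, hb, rfl⟩
      exact ⟨a, trivial, b, (le_iSup N i : N i ≤ ⨆ i, N i) hb, rfl⟩
    intro x hx
    show x ∈ closure (Submodule.span ℂ {x : T | ∃ a ∈ (Set.univ : Set A),
      ∃ b ∈ ((⨆ i, N i : TwoSidedIdeal B) : Set B), x = p.incl a b} : Set T)
    rw [← Submodule.topologicalClosure_coe]
    exact hle hx

/-- The flipped tensor product model. -/
def OSProjTensor.flip (p : OSProjTensor A B T) : OSProjTensor B A T where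
  incl := p.incl.flip
  mul_incl b b' a a' := by
    simp only [LinearMap.flip_apply]
    rw [p.mul_incl]
  star_incl b a := by simp only [LinearMap.flip_apply, p.star_incl]
  norm_incl b a := by simp only [LinearMap.flip_apply, p.norm_incl]; ring
  dense_span := by
    have hset : {x : T | ∃ b a, x = p.incl.flip b a} = {x : T | ∃ a b, x = p.incl a b} := by
      ext x
      constructor
      · rintro ⟨b, a, rfl⟩; exact ⟨a, b, rfl⟩
      · rintro ⟨a, b, rfl⟩; exact ⟨b, a, rfl⟩
    rw [hset]
    exact p.dense_span

lemma OSProjTensor.flip_prodIdeal (p : OSProjTensor A B T) (K : Set A) (L : Set B) :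
    p.flip.prodIdeal L K = p.prodIdeal K L := by
  unfold OSProjTensor.prodIdeal
  have hset : {x : T | ∃ b ∈ L, ∃ a ∈ K, x = p.flip.incl b a}
      = {x : T | ∃ a ∈ K, ∃ b ∈ L, x = p.incl a b} := by
    ext x
    constructor
    · rintro ⟨b, hb, a, ha, rfl⟩; exact ⟨a, ha, b, hb, rfl⟩
    · rintro ⟨a, ha, b, hb, rfl⟩; exact ⟨b, hb, a, ha, rfl⟩
  rw [hset]

end Assembly


/-- The operator space projective tensor product distributes over finite sums of closed
ideals: `A ⊗̂ (Σᵢ Nᵢ) = Σᵢ (A ⊗̂ Nᵢ)` and `(Σᵢ Mᵢ) ⊗̂ B = Σᵢ (Mᵢ ⊗̂ B)`. -/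
theorem prodIdeal_distrib_sum (p : OSProjTensor A B T) {n : ℕ}
    (M : Fin n → TwoSidedIdeal A) (N : Fin n → TwoSidedIdeal B)
    (hM : ∀ i, IsClosed ((M i : Set A))) (hN : ∀ i, IsClosed ((N i : Set B)))
    (hMbai : ∀ i, BoundedApproxIdentity ((M i : Set A)))
    (hNbai : ∀ i, BoundedApproxIdentity ((N i : Set B))) :
    (p.prodIdeal Set.univ ((⨆ i, N i : TwoSidedIdeal B) : Set B) =
      {x : T | ∃ f : Fin n → T, (∀ i, f i ∈ p.prodIdeal Set.univ ((N i : Set B))) ∧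
        x = ∑ i, f i}) ∧
    (p.prodIdeal ((⨆ i, M i : TwoSidedIdeal A) : Set A) Set.univ =
      {x : T | ∃ f : Fin n → T, (∀ i, f i ∈ p.prodIdeal ((M i : Set A)) Set.univ) ∧
        x = ∑ i, f i}) := by
  constructor
  · exact p.main_half N hNbai
  · simp only [← OSProjTensor.flip_prodIdeal p]
    exact p.flip.main_half M hMbai
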